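/- Let a and c be real numbers with 0 < a < c. Then (4π/c)·( 2c² E(a/c) − (c² − a²) K(a/c) ) = 4π(a + c)·E( 2√(ac)/(a + c) ). Equivalently, S(0,a,c) = 4π(a+c) E(2√(ac)/(a+c)), so the area of the generalized Lawson surface T_{a,0,c} agrees with the area of the corresponding bipolar Lawson surface. -/

import Mathlib

open Real

/-- Complete elliptic integral of the first kind. -/
noncomputable def completeEllipticK (k : ℝ) : ℝ :=
  ∫ θ in (0:ℝ)..(π/2), 1 / Real.sqrt (1 - k^2 * Real.sin θ ^ 2)

/-- Complete elliptic integral of the second kind. -/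
noncomputable def completeEllipticE (k : ℝ) : ℝ :=
  ∫ θ in (0:ℝ)..(π/2), Real.sqrt (1 - k^2 * Real.sin θ ^ 2)

open Set intervalIntegral

noncomputable def eD (k θ : ℝ) : ℝ := Real.sqrt (1 - k^2 * Real.sin θ ^ 2)

noncomputable def eW (k θ : ℝ) : ℝ := (1+k) * Real.sin θ / (1 + k * Real.sin θ ^ 2)

noncomputable def ePhi (k θ : ℝ) : ℝ := Real.arcsin (eW k θ)

noncomputable def ePhi' (k θ : ℝ) : ℝ :=
  (1+k) * (1 - k * Real.sin θ ^ 2) / ((1 + k * Real.sin θ ^ 2) * eD k θ)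

noncomputable def eG (k θ : ℝ) : ℝ :=
  2*k*Real.sin θ*Real.cos θ*eD k θ / (1 + k*Real.sin θ ^ 2)

noncomputable def eG' (k θ : ℝ) : ℝ :=
  (2*k*((Real.cos θ^2 - Real.sin θ^2)*eD k θ - k^2*Real.sin θ^2*Real.cos θ^2/eD k θ)
      * (1 + k*Real.sin θ^2)
   - 2*k*Real.sin θ*Real.cos θ*eD k θ*(2*k*Real.sin θ*Real.cos θ)) / (1 + k*Real.sin θ^2)^2

section facts
variable {k : ℝ}

lemma eD_sq (hk0 : 0 ≤ k) (hk1 : k < 1) (θ : ℝ) : eD k θ ^ 2 = 1 - k^2 * Real.sin θ ^ 2 := by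
  have h1 : Real.sin θ ^ 2 ≤ 1 := Real.sin_sq_le_one θ
  have : (0:ℝ) ≤ 1 - k^2 * Real.sin θ ^ 2 := by nlinarith [sq_nonneg (Real.sin θ), sq_nonneg k, sq_nonneg (Real.sin θ * k)]
  rw [eD, Real.sq_sqrt this]

lemma eD_pos (hk0 : 0 ≤ k) (hk1 : k < 1) (θ : ℝ) : 0 < eD k θ := by
  have h1 : Real.sin θ ^ 2 ≤ 1 := Real.sin_sq_le_one θ
  have : (0:ℝ) < 1 - k^2 * Real.sin θ ^ 2 := by nlinarith [sq_nonneg (Real.sin θ), sq_nonneg k, sq_nonneg (Real.sin θ * k)]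
  exact Real.sqrt_pos.mpr this

lemma eDen_pos (hk0 : 0 ≤ k) (θ : ℝ) : 0 < 1 + k * Real.sin θ ^ 2 := by
  positivity

lemma eW_le (hk0 : 0 ≤ k) (hk1 : k < 1) (θ : ℝ) : eW k θ ≤ 1 := by
  have h1 : Real.sin θ ≤ 1 := Real.sin_le_one θ
  have h2 : -1 ≤ Real.sin θ := Real.neg_one_le_sin θ
  rw [eW, div_le_one (eDen_pos hk0 θ)]
  nlinarith [mul_nonneg (sub_nonneg.2 h1) (sub_nonneg.2 (show k * Real.sin θ ≤ 1 by nlinarith))]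

lemma eW_ge (hk0 : 0 ≤ k) (hk1 : k < 1) (θ : ℝ) : -1 ≤ eW k θ := by
  have h1 : Real.sin θ ≤ 1 := Real.sin_le_one θ
  have h2 : -1 ≤ Real.sin θ := Real.neg_one_le_sin θ
  rw [eW, le_div_iff₀ (eDen_pos hk0 θ)]
  nlinarith [mul_nonneg (sub_nonneg.2 (show (-1:ℝ) ≤ Real.sin θ from h2))
      (sub_nonneg.2 (show -1 ≤ k * Real.sin θ by nlinarith))]

end facts

section main
variable {k : ℝ}

lemma sin_ePhi (hk0 : 0 ≤ k) (hk1 : k < 1) (θ : ℝ) :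
    Real.sin (ePhi k θ) = eW k θ :=
  Real.sin_arcsin (eW_ge hk0 hk1 θ) (eW_le hk0 hk1 θ)

lemma k1_sq (hk0 : 0 ≤ k) : (2*Real.sqrt k/(1+k))^2 = 4*k/(1+k)^2 := by
  rw [div_pow, mul_pow, Real.sq_sqrt hk0]; norm_num

lemma g_comp (hk0 : 0 ≤ k) (hk1 : k < 1) (θ : ℝ) :
    Real.sqrt (1 - (2*Real.sqrt k/(1+k))^2 * Real.sin (ePhi k θ)^2)
      = (1 - k*Real.sin θ^2)/(1 + k*Real.sin θ^2) := by
  have hden := (eDen_pos hk0 θ).ne'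
  have h1k : (0:ℝ) < 1+k := by linarith
  have key : 1 - (2*Real.sqrt k/(1+k))^2 * Real.sin (ePhi k θ)^2
      = ((1 - k*Real.sin θ^2)/(1+k*Real.sin θ^2))^2 := by
    rw [sin_ePhi hk0 hk1, k1_sq hk0, eW]
    field_simp
    ring
  rw [key, Real.sqrt_sq]
  apply div_nonneg _ (eDen_pos hk0 θ).le
  nlinarith [Real.sin_sq_le_one θ, sq_nonneg (Real.sin θ)]

lemma ePhi_hasDeriv (hk0 : 0 ≤ k) (hk1 : k < 1) {θ : ℝ} (hθ : θ ∈ Ioo (0:ℝ) (π/2)) :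
    HasDerivAt (ePhi k) (ePhi' k θ) θ := by
  have hpi := Real.pi_pos
  have hcpos : 0 < Real.cos θ := Real.cos_pos_of_mem_Ioo ⟨by linarith [hθ.1], hθ.2⟩
  have hspos : 0 < Real.sin θ := Real.sin_pos_of_pos_of_lt_pi hθ.1 (by linarith [hθ.2])
  have hs1 : Real.sin θ < 1 := by
    nlinarith [Real.sin_sq_add_cos_sq θ]
  have hdenp := eDen_pos hk0 (k := k) θ
  have hDp := eD_pos hk0 hk1 (k := k) θ
  have hD2 := eD_sq hk0 hk1 (k := k) θ
  have hw_lt : eW k θ < 1 := by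
    rw [eW, div_lt_one hdenp]
    nlinarith [mul_pos (sub_pos.2 hs1) (sub_pos.2 (show k * Real.sin θ < 1 by nlinarith))]
  have hw_gt : (-1:ℝ) < eW k θ := by
    have : 0 ≤ eW k θ := div_nonneg (by nlinarith) hdenp.le
    linarith
  -- derivative of w
  have hn : HasDerivAt (fun θ => (1+k)*Real.sin θ) ((1+k)*Real.cos θ) θ :=
    (Real.hasDerivAt_sin θ).const_mul _
  have hd0 : HasDerivAt (fun θ => Real.sin θ ^ 2) (2*Real.sin θ*Real.cos θ) θ := by
    have := (Real.hasDerivAt_sin θ).fun_pow 2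
    simpa [mul_comm, mul_assoc, mul_left_comm] using this
  have hd : HasDerivAt (fun θ => 1 + k*Real.sin θ^2) (k*(2*Real.sin θ*Real.cos θ)) θ :=
    ((hd0.const_mul k).const_add 1)
  have hw : HasDerivAt (eW k)
      (((1+k)*Real.cos θ*(1+k*Real.sin θ^2) - (1+k)*Real.sin θ*(k*(2*Real.sin θ*Real.cos θ)))
        / (1+k*Real.sin θ^2)^2) θ := by
    exact hn.fun_div hd hdenp.ne'
  have harc := Real.hasDerivAt_arcsin (ne_of_gt hw_gt) (ne_of_lt hw_lt)
  have hcomp := harc.comp θ hw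
  have hsq : Real.sqrt (1 - eW k θ^2) = Real.cos θ * eD k θ / (1+k*Real.sin θ^2) := by
    have h1 : 1 - eW k θ^2 = (Real.cos θ * eD k θ / (1+k*Real.sin θ^2))^2 := by
      rw [eW]
      have hc2 : Real.cos θ^2 = 1 - Real.sin θ^2 := Real.cos_sq' θ
      field_simp
      nlinarith [hD2, hc2]
    rw [h1, Real.sqrt_sq (by positivity)]
  refine hcomp.congr_deriv ?_
  rw [hsq, ePhi']
  field_simp
  ring

end main

section gpart
variable {k : ℝ}

lemma eG_hasDeriv (hk0 : 0 ≤ k) (hk1 : k < 1) (θ : ℝ) :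
    HasDerivAt (eG k) (eG' k θ) θ := by
  have hdenp := eDen_pos hk0 (k := k) θ
  have hDp := eD_pos hk0 hk1 (k := k) θ
  have hD2 := eD_sq hk0 hk1 (k := k) θ
  have hs1 : Real.sin θ ^ 2 ≤ 1 := Real.sin_sq_le_one θ
  have hin : HasDerivAt (fun θ => 1 - k^2*Real.sin θ^2) (-(k^2*(2*Real.sin θ*Real.cos θ))) θ := by
    have hd0 : HasDerivAt (fun θ => Real.sin θ ^ 2) (2*Real.sin θ*Real.cos θ) θ := by
      simpa [mul_comm, mul_assoc, mul_left_comm] using (Real.hasDerivAt_sin θ).fun_pow 2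
    simpa using ((hd0.const_mul (k^2)).const_sub 1)
  have hDd : HasDerivAt (eD k) (1/(2*eD k θ) * (-(k^2*(2*Real.sin θ*Real.cos θ)))) θ := by
    have hne : 1 - k^2*Real.sin θ^2 ≠ 0 := by nlinarith [sq_nonneg (k*Real.sin θ)]
    exact (Real.hasDerivAt_sqrt hne).comp θ hin
  have h1 : HasDerivAt (fun θ => 2*k*Real.sin θ) (2*k*Real.cos θ) θ :=
    (Real.hasDerivAt_sin θ).const_mul _
  have h2 := h1.mul (Real.hasDerivAt_cos θ)
  have h3 := h2.mul hDd
  have hdd : HasDerivAt (fun θ => 1 + k*Real.sin θ^2) (k*(2*Real.sin θ*Real.cos θ)) θ := by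
    have hd0 : HasDerivAt (fun θ => Real.sin θ ^ 2) (2*Real.sin θ*Real.cos θ) θ := by
      simpa [mul_comm, mul_assoc, mul_left_comm] using (Real.hasDerivAt_sin θ).fun_pow 2
    exact ((hd0.const_mul k).const_add 1)
  have h4 := h3.fun_div hdd hdenp.ne'
  refine h4.congr_deriv ?_
  rw [eG']
  simp only [Pi.mul_apply]
  have hc2 : Real.cos θ^2 = 1 - Real.sin θ^2 := Real.cos_sq' θ
  field_simp
  ring

lemma eD_cont : Continuous (eD k) := by
  apply Continuous.sqrt
  continuity

lemma eG'_cont (hk0 : 0 ≤ k) (hk1 : k < 1) : Continuous (eG' k) := by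
  apply Continuous.div
  · apply Continuous.sub
    · apply Continuous.mul
      · apply Continuous.mul continuous_const
        apply Continuous.sub
        · exact ((Real.continuous_cos.pow 2).sub (Real.continuous_sin.pow 2)).mul eD_cont
        · exact Continuous.div (by continuity) eD_cont (fun θ => (eD_pos hk0 hk1 θ).ne')
      · continuity
    · exact (((continuous_const.mul Real.continuous_sin).mul Real.continuous_cos).mul eD_cont).mul
        ((continuous_const.mul Real.continuous_sin).mul Real.continuous_cos)
  · continuity
  · exact fun θ => pow_ne_zero 2 (eDen_pos hk0 θ).ne'

lemma integral_eG' (hk0 : 0 ≤ k) (hk1 : k < 1) :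
    ∫ θ in (0:ℝ)..(π/2), eG' k θ = 0 := by
  rw [integral_eq_sub_of_hasDerivAt (f := eG k) (fun x _ => eG_hasDeriv hk0 hk1 x)
    ((eG'_cont hk0 hk1).intervalIntegrable 0 (π/2))]
  simp [eG]

lemma key_identity (hk0 : 0 ≤ k) (hk1 : k < 1) (θ : ℝ) :
    ePhi' k θ * ((1 - k*Real.sin θ^2)/(1+k*Real.sin θ^2))
      = (2*eD k θ - (1-k^2)*(1/eD k θ) + eG' k θ)/(1+k) := by
  have hdenp := eDen_pos hk0 (k := k) θ
  have hDp := eD_pos hk0 hk1 (k := k) θ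
  have hD2 := eD_sq hk0 hk1 (k := k) θ
  have hc2 : Real.cos θ^2 = 1 - Real.sin θ^2 := Real.cos_sq' θ
  have h1k : (0:ℝ) < 1 + k := by linarith
  rw [ePhi', eG']
  have hD4 : eD k θ^4 = (1 - k^2*Real.sin θ^2)^2 := by rw [← hD2]; ring
  field_simp
  ring_nf
  simp only [hc2, hD4, hD2]
  ring

end gpart

lemma landen {k : ℝ} (hk0 : 0 ≤ k) (hk1 : k < 1) :
    (1+k) * completeEllipticE (2*Real.sqrt k/(1+k))
      = 2*completeEllipticE k - (1-k^2)*completeEllipticK k := by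
  have h1k : (0:ℝ) < 1+k := by linarith
  have hpi := Real.pi_pos
  have hwcont : Continuous (eW k) :=
    Continuous.div (by continuity) (by continuity) (fun θ => (eDen_pos hk0 θ).ne')
  have hφcont : Continuous (ePhi k) := Real.continuous_arcsin.comp hwcont
  have hφ'cont : Continuous (ePhi' k) :=
    Continuous.div (by continuity) ((by continuity : Continuous fun θ =>
        (1 + k*Real.sin θ^2)).mul eD_cont)
      (fun θ => mul_ne_zero (eDen_pos hk0 θ).ne' (eD_pos hk0 hk1 θ).ne')
  have hφ0 : ePhi k 0 = 0 := by simp [ePhi, eW]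
  have hφ1 : ePhi k (π/2) = π/2 := by
    have h : eW k (π/2) = 1 := by
      rw [eW, Real.sin_pi_div_two]
      field_simp
    rw [ePhi, h, Real.arcsin_one]
  have hderiv : ∀ x ∈ Ioo (min (0:ℝ) (π/2)) (max 0 (π/2)),
      HasDerivWithinAt (ePhi k) (ePhi' k x) (Ioi x) x := by
    intro x hx
    rw [min_eq_left (by positivity), max_eq_right (by positivity)] at hx
    exact (ePhi_hasDeriv hk0 hk1 hx).hasDerivWithinAt
  have hg : Continuous fun ψ => Real.sqrt (1 - (2*Real.sqrt k/(1+k))^2 * Real.sin ψ ^ 2) :=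
    Continuous.sqrt (by continuity)
  have hsub := intervalIntegral.integral_comp_smul_deriv'' (a := (0:ℝ)) (b := π/2)
      (f := ePhi k) (f' := ePhi' k)
      (g := fun ψ => Real.sqrt (1 - (2*Real.sqrt k/(1+k))^2 * Real.sin ψ ^ 2))
      hφcont.continuousOn hderiv hφ'cont.continuousOn hg.continuousOn
  rw [hφ0, hφ1] at hsub
  have hE : completeEllipticE (2*Real.sqrt k/(1+k))
      = ∫ θ in (0:ℝ)..(π/2), ePhi' k θ •
          (fun ψ => Real.sqrt (1 - (2*Real.sqrt k/(1+k))^2 * Real.sin ψ ^ 2)) (ePhi k θ) := by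
    rw [show (∫ θ in (0:ℝ)..(π/2), ePhi' k θ •
          (fun ψ => Real.sqrt (1 - (2*Real.sqrt k/(1+k))^2 * Real.sin ψ ^ 2)) (ePhi k θ))
        = ∫ x in (0:ℝ)..(π/2), ePhi' k x •
          ((fun ψ => Real.sqrt (1 - (2*Real.sqrt k/(1+k))^2 * Real.sin ψ ^ 2)) ∘ ePhi k) x from rfl,
      hsub, completeEllipticE]
  have hpt : ∀ θ, ePhi' k θ •
        (fun ψ => Real.sqrt (1 - (2*Real.sqrt k/(1+k))^2 * Real.sin ψ ^ 2)) (ePhi k θ)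
      = (2*eD k θ - (1-k^2)*(1/eD k θ) + eG' k θ)/(1+k) := by
    intro θ
    simp only [smul_eq_mul]
    beta_reduce
    rw [g_comp hk0 hk1 θ]
    exact key_identity hk0 hk1 θ
  have hint1 : IntervalIntegrable (fun θ => 2*eD k θ) MeasureTheory.volume 0 (π/2) :=
    (continuous_const.mul eD_cont).intervalIntegrable 0 (π/2)
  have hint2 : IntervalIntegrable (fun θ => (1-k^2)*(1/eD k θ)) MeasureTheory.volume 0 (π/2) :=
    (continuous_const.mul (Continuous.div continuous_const eD_cont
      (fun θ => (eD_pos hk0 hk1 θ).ne'))).intervalIntegrable 0 (π/2)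
  have hint3 : IntervalIntegrable (eG' k) MeasureTheory.volume 0 (π/2) :=
    (eG'_cont hk0 hk1).intervalIntegrable 0 (π/2)
  rw [hE]
  simp only [hpt]
  rw [intervalIntegral.integral_div, intervalIntegral.integral_add (hint1.sub hint2) hint3,
    intervalIntegral.integral_sub hint1 hint2, integral_eG' hk0 hk1,
    intervalIntegral.integral_const_mul, intervalIntegral.integral_const_mul]
  have hEk : (∫ θ in (0:ℝ)..(π/2), eD k θ) = completeEllipticE k := rfl
  have hKk : (∫ θ in (0:ℝ)..(π/2), 1/eD k θ) = completeEllipticK k := rfl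
  rw [hEk, hKk]
  field_simp
  ring

/-- For `0 < a < c`, `(4π/c)(2c²E(a/c) − (c²−a²)K(a/c)) = 4π(a+c)E(2√(ac)/(a+c))`:
the area `S(0,a,c)` of the generalized Lawson surface `T_{a,0,c}` agrees with the
area of the corresponding bipolar Lawson surface. -/
theorem area_T_a_zero_c (a c : ℝ) (ha : 0 < a) (hac : a < c) :
    4 * π / c * (2 * c^2 * completeEllipticE (a / c)
        - (c^2 - a^2) * completeEllipticK (a / c)) =
      4 * π * (a + c) * completeEllipticE (2 * Real.sqrt (a * c) / (a + c)) := by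
  have hc : 0 < c := ha.trans hac
  have hk0 : 0 ≤ a / c := by positivity
  have hk1 : a / c < 1 := (div_lt_one hc).2 hac
  have hsc : Real.sqrt c ^ 2 = c := Real.sq_sqrt hc.le
  have hscpos : 0 < Real.sqrt c := Real.sqrt_pos.2 hc
  have hargs : 2 * Real.sqrt (a * c) / (a + c) = 2 * Real.sqrt (a/c) / (1 + a/c) := by
    rw [Real.sqrt_mul ha.le, Real.sqrt_div ha.le]
    have hac0 : (0:ℝ) < a + c := by linarith
    field_simp
    linear_combination (c+a)*hsc
  have hl := landen hk0 hk1
  rw [hargs]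
  have h1k : (0:ℝ) < 1 + a/c := by positivity
  have hE : completeEllipticE (2 * Real.sqrt (a/c) / (1 + a/c))
      = (2*completeEllipticE (a/c) - (1-(a/c)^2)*completeEllipticK (a/c)) / (1 + a/c) := by
    rw [eq_div_iff h1k.ne', mul_comm, hl]
  rw [hE]
  field_simp
  ring
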